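/- With the notation of the context, the character sum identity ∑_{x ∈ F_q} χ₄(1 + ω^ℓ·x) = χ₄'(n)³ · χ₄'(n − t²/4)³ · J(η, χ₄') holds. -/

import Mathlib

open Finset

private lemma mulChar_ext_of_gen {F : Type*} [Field F] [Fintype F] {g : Fˣ}
    (hg : ∀ x : Fˣ, x ∈ Subgroup.zpowers g) {χ ψ : MulChar F ℂ}
    (h : χ g = ψ g) : χ = ψ := by
  apply MulChar.ext
  intro a
  obtain ⟨k, rfl⟩ := hg a
  have h' : χ.toUnitHom g = ψ.toUnitHom g :=
    Units.ext (by simpa only [MulChar.coe_toUnitHom] using h)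
  rw [← MulChar.coe_toUnitHom, ← MulChar.coe_toUnitHom, map_zpow, map_zpow, h']

private lemma mulChar_gen_val {F : Type*} [Field F] [Fintype F] {g : Fˣ}
    (hg : ∀ x : Fˣ, x ∈ Subgroup.zpowers g) {χ : MulChar F ℂ}
    (hχ : orderOf χ = 2) : χ g = -1 := by
  have h2 : χ ^ 2 = 1 := by rw [← hχ]; exact pow_orderOf_eq_one χ
  have hsq : (χ g) ^ 2 = 1 := by
    rw [← MulChar.pow_apply_coe, h2, MulChar.one_apply_coe]
  have : (χ g - 1) * (χ g + 1) = 0 := by linear_combination hsq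
  rcases mul_eq_zero.mp this with h1 | h1
  · exfalso
    have hone : χ g = (1 : MulChar F ℂ) g := by
      rw [MulChar.one_apply_coe]; linear_combination h1
    have : χ = 1 := mulChar_ext_of_gen hg hone
    rw [this, orderOf_one] at hχ
    omega
  · linear_combination h1

private lemma gen_not_isSquare {F : Type*} [Field F] [Fintype F]
    (hodd : Fintype.card F % 2 = 1) {g : Fˣ}
    (hg : ∀ x : Fˣ, x ∈ Subgroup.zpowers g) : ¬ IsSquare (g : F) := by
  rintro ⟨b, hb⟩
  have hb0 : b ≠ 0 := by
    rintro rfl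
    exact (Units.ne_zero g) (by simpa using hb)
  obtain ⟨k, hk⟩ := hg (Units.mk0 b hb0)
  have hk' : g ^ k = Units.mk0 b hb0 := hk
  have hgg : g = g ^ (2 * k) := by
    rw [two_mul, zpow_add, hk']
    exact Units.ext (by simpa using hb)
  have h1 : g ^ (2 * k - 1) = 1 := by
    rw [zpow_sub, zpow_one, ← hgg, mul_inv_cancel]
  have hdvd : ((orderOf g : ℤ)) ∣ 2 * k - 1 := orderOf_dvd_iff_zpow_eq_one.mpr h1
  have horder : orderOf g = Fintype.card F - 1 := by
    have := orderOf_eq_card_of_forall_mem_zpowers hg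
    rwa [Nat.card_units, Nat.card_eq_fintype_card] at this
  have hcard : 2 ≤ Fintype.card F := Fintype.one_lt_card
  have h2 : (2 : ℤ) ∣ (orderOf g : ℤ) := by
    rw [horder]
    have : 2 ∣ Fintype.card F - 1 := by omega
    exact_mod_cast Int.natCast_dvd_natCast.mpr this
  obtain ⟨c, hc⟩ := h2.trans hdvd
  omega

private lemma eq_quadChar_of_orderOf_eq_two {F : Type*} [Field F] [Fintype F] [DecidableEq F]
    (hodd : Fintype.card F % 2 = 1) {g : Fˣ}
    (hg : ∀ x : Fˣ, x ∈ Subgroup.zpowers g) {χ : MulChar F ℂ}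
    (hχ : orderOf χ = 2) :
    χ = (quadraticChar F).ringHomComp (Int.castRingHom ℂ) := by
  apply mulChar_ext_of_gen hg
  rw [mulChar_gen_val hg hχ, MulChar.ringHomComp_apply]
  rw [quadraticChar_neg_one_iff_not_isSquare.mpr (gen_not_isSquare hodd hg)]
  norm_num

/-- With `q ≡ 1 (mod 4)` a prime power, `ω` a primitive element of
`F_{q²}`, `χ₄` a multiplicative character of order `4` of `F_{q²}`, `η, χ₄'`
the multiplicative characters of `F_q` of orders `2` and `4` with
`χ₄(ω) = χ₄'(ω^{q+1})`, `ℓ` an integer not divisible by `q + 1`,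
`n = ω^{ℓ(q+1)}` and `t = ω^ℓ + ω^{ℓq}` (elements of `F_q`), one has
`∑_{x ∈ F_q} χ₄(1 + ω^ℓ x) = χ₄'(n)³ χ₄'(n − t²/4)³ J(η, χ₄')`. -/
theorem stmt_6 (K L : Type*) [Field K] [Field L] [Fintype K] [Fintype L]
    [Algebra K L] (q : ℕ)
    (hq : Fintype.card K = q) (hL : Fintype.card L = q ^ 2) (hq4 : q % 4 = 1)
    (ω : L) (hω : orderOf ω = q ^ 2 - 1)
    (χ₄ : MulChar L ℂ) (hχ₄ : orderOf χ₄ = 4)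
    (η χ₄' : MulChar K ℂ) (hη : orderOf η = 2) (hχ₄' : orderOf χ₄' = 4)
    (γ : K) (hγ : algebraMap K L γ = ω ^ (q + 1))
    (hcompat : χ₄ ω = χ₄' γ)
    (ℓ : ℤ) (hℓ : ¬ ((q : ℤ) + 1 ∣ ℓ))
    (n t : K)
    (hn : algebraMap K L n = ω ^ (ℓ * ((q : ℤ) + 1)))
    (ht : algebraMap K L t = ω ^ ℓ + ω ^ (ℓ * (q : ℤ))) :
    ∑ x : K, χ₄ (1 + ω ^ ℓ * algebraMap K L x)
      = (χ₄' n) ^ 3 * (χ₄' (n - t ^ 2 / 4)) ^ 3 * (∑ x : K, η x * χ₄' (1 - x)) := by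
  classical
  -- numerics
  have hq2le : 2 ≤ q := hq ▸ Fintype.one_lt_card
  have hq5 : 5 ≤ q := by omega
  have hq2sq : 25 ≤ q ^ 2 := by
    have := Nat.mul_le_mul hq5 hq5
    simpa [pow_two] using this
  have hqodd : q % 2 = 1 := by omega
  have hcharK : ringChar K ≠ 2 := by
    intro h
    have := FiniteField.even_card_of_char_two h
    rw [hq] at this; omega
  have h2K : (2 : K) ≠ 0 := Ring.two_ne_zero hcharK
  have h4K : (4 : K) ≠ 0 := by
    intro h
    apply h2K
    have h4 : (4 : K) = 2 * 2 := by norm_num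
    rw [h4] at h
    exact mul_self_eq_zero.mp h
  -- ω facts
  have hω0 : ω ≠ 0 := by
    intro h
    have h1 : ω ^ (q ^ 2 - 1) = 1 := hω ▸ pow_orderOf_eq_one ω
    rw [h, zero_pow (by omega : q ^ 2 - 1 ≠ 0)] at h1
    exact one_ne_zero h1.symm
  set ωu : Lˣ := Units.mk0 ω hω0 with hωu_def
  have hωuval : (ωu : L) = ω := rfl
  have horderωu : orderOf ωu = q ^ 2 - 1 := by
    rw [← orderOf_units]; exact hω
  have hgenL : ∀ x : Lˣ, x ∈ Subgroup.zpowers ωu := by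
    have hcard : Nat.card (Subgroup.zpowers ωu) = Nat.card Lˣ := by
      rw [Nat.card_zpowers, horderωu, Nat.card_units, Nat.card_eq_fintype_card, hL]
    have htop := Subgroup.eq_top_of_card_eq _ hcard
    intro x; rw [htop]; exact Subgroup.mem_top x
  have hinj : Function.Injective (algebraMap K L) := (algebraMap K L).injective
  have hn0 : n ≠ 0 := by
    intro h
    rw [h, map_zero] at hn
    exact zpow_ne_zero _ hω0 hn.symm
  -- divisibility tools
  have hdvd_tool : ∀ j : ℤ, ω ^ j = 1 → ((q : ℤ) ^ 2 - 1) ∣ j := by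
    intro j hj
    have hju : ωu ^ j = 1 := by
      apply Units.ext
      rw [Units.val_zpow_eq_zpow_val, hωuval, hj, Units.val_one]
    have hd := orderOf_dvd_iff_zpow_eq_one.mpr hju
    rw [horderωu] at hd
    have hcast : ((q ^ 2 - 1 : ℕ) : ℤ) = (q : ℤ) ^ 2 - 1 := by
      have h1 : 1 ≤ q ^ 2 := by omega
      push_cast [Nat.cast_sub h1]
      ring
    rwa [hcast] at hd
  have hnotK : ∀ j : ℤ, ω ^ (j * ((q : ℤ) - 1)) = 1 → ((q : ℤ) + 1) ∣ j := by
    intro j hj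
    obtain ⟨c, hc⟩ := hdvd_tool _ hj
    have hq1 : (q : ℤ) - 1 ≠ 0 := by
      have : (5 : ℤ) ≤ (q : ℤ) := by exact_mod_cast hq5
      omega
    refine ⟨c, ?_⟩
    apply mul_right_cancel₀ hq1
    linear_combination hc
  -- the compatibility lemma : χ₄ z = χ₄' u whenever z^(q+1) = aM u
  have hγ0 : γ ≠ 0 := by
    intro h
    rw [h, map_zero] at hγ
    exact pow_ne_zero _ hω0 hγ.symm
  set γu : Kˣ := Units.mk0 γ hγ0 with hγu_def
  have hKL : ∀ (z : L) (u : K), z ^ (q + 1) = algebraMap K L u → χ₄ z = χ₄' u := by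
    intro z u hzu
    by_cases hz : z = 0
    · subst hz
      rw [zero_pow (by omega : q + 1 ≠ 0)] at hzu
      have hu : u = 0 := hinj (by rw [map_zero]; exact hzu.symm)
      subst hu
      rw [MulChar.map_zero, MulChar.map_zero]
    · set zu : Lˣ := Units.mk0 z hz with hzu_def
      obtain ⟨k, hk⟩ := hgenL zu
      have hk' : ωu ^ k = zu := hk
      set f : Kˣ →* Lˣ := Units.map (algebraMap K L : K →* L) with hf_def
      have hfγ : f γu = ωu ^ (q + 1) := by
        apply Units.ext
        rw [Units.val_pow_eq_pow_val, hωuval]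
        exact hγ
      have hcomm : (ωu ^ ((q : ℕ) + 1)) ^ k = (ωu ^ k) ^ ((q : ℕ) + 1) := by
        rw [← zpow_natCast (ωu ^ k), ← zpow_mul, mul_comm, zpow_mul, zpow_natCast]
      have hu : u = ((γu ^ k : Kˣ) : K) := by
        apply hinj
        have h1 : algebraMap K L ((γu ^ k : Kˣ) : K) = ((f (γu ^ k) : Lˣ) : L) := rfl
        rw [h1, map_zpow, hfγ, hcomm, hk']
        rw [← hzu]
        norm_cast
      have hχω : χ₄.toUnitHom ωu = χ₄'.toUnitHom γu := by
        apply Units.ext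
        rw [MulChar.coe_toUnitHom, MulChar.coe_toUnitHom, hωuval]
        exact hcompat
      have hz1 : χ₄ z = ((χ₄.toUnitHom ωu) ^ k : ℂˣ) := by
        have : z = ((ωu ^ k : Lˣ) : L) := by rw [hk']; rfl
        rw [this, ← MulChar.coe_toUnitHom, map_zpow]
      have hz2 : χ₄' u = ((χ₄'.toUnitHom γu) ^ k : ℂˣ) := by
        rw [hu, ← MulChar.coe_toUnitHom, map_zpow]
      rw [hz1, hz2, hχω]
  -- Frobenius / norm computation
  haveI : CharP K (ringChar K) := ringChar.charP K
  haveI : CharP L (ringChar K) := charP_of_injective_algebraMap hinj (ringChar K)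
  obtain ⟨kk, hpprime, hcardK⟩ := FiniteField.card K (ringChar K)
  haveI : Fact (Nat.Prime (ringChar K)) := ⟨hpprime⟩
  have hqpk : q = ringChar K ^ (kk : ℕ) := by rw [← hq, hcardK]
  have hfrob : ∀ a b : L, (a + b) ^ q = a ^ q + b ^ q := by
    intro a b
    rw [hqpk]
    exact add_pow_char_pow a b (ringChar K) kk
  have hNC : ∀ x : K, (1 + ω ^ ℓ * algebraMap K L x) ^ (q + 1)
      = algebraMap K L (1 + t * x + n * x ^ 2) := by
    intro x
    have hxq : (algebraMap K L x) ^ q = algebraMap K L x := by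
      rw [← map_pow, ← hq, FiniteField.pow_card]
    have hωq : (ω ^ ℓ) ^ q = ω ^ (ℓ * (q : ℤ)) := by
      rw [← zpow_natCast (ω ^ ℓ) q, ← zpow_mul]
    have hexp : ℓ + ℓ * (q : ℤ) = ℓ * ((q : ℤ) + 1) := by ring
    calc (1 + ω ^ ℓ * algebraMap K L x) ^ (q + 1)
        = (1 + ω ^ ℓ * algebraMap K L x) ^ q * (1 + ω ^ ℓ * algebraMap K L x) :=
          pow_succ _ q
      _ = (1 + ω ^ (ℓ * (q : ℤ)) * algebraMap K L x) * (1 + ω ^ ℓ * algebraMap K L x) := by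
          rw [hfrob, one_pow, mul_pow, hxq, hωq]
      _ = 1 + (ω ^ ℓ + ω ^ (ℓ * (q : ℤ))) * algebraMap K L x
            + (ω ^ ℓ * ω ^ (ℓ * (q : ℤ))) * (algebraMap K L x) ^ 2 := by ring
      _ = algebraMap K L (1 + t * x + n * x ^ 2) := by
          rw [← ht, ← zpow_add₀ hω0, hexp, ← hn]
          push_cast [map_add, map_mul, map_one, map_pow]
          ring
  have hstepA : ∀ x : K, χ₄ (1 + ω ^ ℓ * algebraMap K L x) = χ₄' (1 + t * x + n * x ^ 2) :=
    fun x => hKL _ _ (hNC x)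
  -- m is a nonsquare
  set m : K := n - t ^ 2 / 4 with hm_def
  have hmNS : ¬ IsSquare m := by
    rintro ⟨s, hs⟩
    obtain ⟨i, hi⟩ := FiniteField.isSquare_neg_one_iff.mpr (by rw [hq]; omega)
    set r : K := t / 2 + i * s with hr_def
    have hroot : r ^ 2 - t * r + n = 0 := by
      rw [hm_def] at hs
      rw [hr_def]
      field_simp at hs ⊢
      linear_combination hs - 4 * s ^ 2 * hi
    have hmulω : ω ^ ℓ * ω ^ (ℓ * (q : ℤ)) = ω ^ (ℓ * ((q : ℤ) + 1)) := by
      rw [← zpow_add₀ hω0]; ring_nf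
    have hrootL : (algebraMap K L r - ω ^ ℓ) * (algebraMap K L r - ω ^ (ℓ * (q : ℤ))) = 0 := by
      have h1 : algebraMap K L (r ^ 2 - t * r + n) = 0 := by rw [hroot, map_zero]
      rw [map_add, map_sub, map_mul, map_pow, ht, hn] at h1
      linear_combination h1 + hmulω
    have hcase : ∀ j : ℤ, algebraMap K L r = ω ^ j → ω ^ (j * ((q : ℤ) - 1)) = 1 := by
      intro j hj
      have hr0 : r ≠ 0 := by
        intro h
        rw [h, map_zero] at hj
        exact zpow_ne_zero j hω0 hj.symm
      have h3 : r ^ (q - 1) = 1 := by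
        rw [← hq]; exact FiniteField.pow_card_sub_one_eq_one r hr0
      have h4 : (algebraMap K L r) ^ ((q : ℤ) - 1) = 1 := by
        have hc : ((q - 1 : ℕ) : ℤ) = (q : ℤ) - 1 := by
          push_cast [Nat.cast_sub (by omega : 1 ≤ q)]; ring
        rw [← hc, zpow_natCast, ← map_pow, h3, map_one]
      rw [hj, ← zpow_mul] at h4
      exact h4
    rcases mul_eq_zero.mp hrootL with hc | hc
    · have hj := hcase ℓ (by linear_combination hc)
      exact hℓ (hnotK ℓ hj)
    · have hj := hcase (ℓ * (q : ℤ)) (by linear_combination hc)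
      have hdq : ((q : ℤ) + 1) ∣ ℓ * (q : ℤ) := hnotK _ hj
      have hcop : IsCoprime ((q : ℤ) + 1) (q : ℤ) := ⟨1, -1, by ring⟩
      exact hℓ (hcop.dvd_of_dvd_mul_right hdq)
  have hm0 : m ≠ 0 := fun h => hmNS (h ▸ ⟨0, by ring⟩)
  -- characters on K
  obtain ⟨gK, hgK⟩ := IsCyclic.exists_generator (α := Kˣ)
  have hηquad : η = (quadraticChar K).ringHomComp (Int.castRingHom ℂ) :=
    eq_quadChar_of_orderOf_eq_two (hq ▸ hqodd) hgK hη
  have hη2 : χ₄' ^ 2 = η := by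
    have h2 : orderOf (χ₄' ^ 2) = 2 := by
      rw [orderOf_pow, hχ₄']
      norm_num
    apply mulChar_ext_of_gen hgK
    rw [mulChar_gen_val hgK h2, mulChar_gen_val hgK hη]
  -- character value facts
  set d : K := m * (n⁻¹ * n⁻¹) with hd_def
  have hd0 : d ≠ 0 := mul_ne_zero hm0 (mul_ne_zero (inv_ne_zero hn0) (inv_ne_zero hn0))
  have hquadval : ∀ u : K, η u = ((quadraticChar K u : ℤ) : ℂ) := by
    intro u
    rw [hηquad]
    simp [MulChar.ringHomComp_apply]
  have hηm : η m = -1 := by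
    rw [hquadval, quadraticChar_neg_one_iff_not_isSquare.mpr hmNS]
    norm_num
  have hηsq : ∀ a : K, a ≠ 0 → η (a * a) = 1 := by
    intro a ha
    rw [hquadval, (quadraticChar_one_iff_isSquare (mul_ne_zero ha ha)).mpr ⟨a, rfl⟩]
    norm_num
  have hηneg1 : η (-1 : K) = 1 := by
    have hsq : IsSquare (-1 : K) := FiniteField.isSquare_neg_one_iff.mpr (by rw [hq]; omega)
    rw [hquadval, (quadraticChar_one_iff_isSquare (neg_ne_zero.mpr one_ne_zero)).mpr hsq]
    norm_num
  have hηd : η (-d) = -1 := by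
    have hrw : -d = (-1 : K) * m * (n⁻¹ * n⁻¹) := by rw [hd_def]; ring
    rw [hrw, map_mul, map_mul, hηneg1, hηm, hηsq n⁻¹ (inv_ne_zero hn0)]
    ring
  have hae : χ₄' n * χ₄' n⁻¹ = 1 := by
    rw [← map_mul, mul_inv_cancel₀ hn0, map_one]
  have hb2 : χ₄' m * χ₄' m = -1 := by
    have h1 : (χ₄' ^ 2) m = χ₄' m ^ 2 := MulChar.pow_apply' χ₄' (by norm_num) m
    have h2 : χ₄' m * χ₄' m = (χ₄' ^ 2) m := by rw [h1]; ring
    rw [h2, hη2, hηm]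
  have ha4 : (χ₄' n) ^ 4 = 1 := by
    have h1 : (χ₄' ^ 4) n = χ₄' n ^ 4 := MulChar.pow_apply' χ₄' (by norm_num) n
    rw [← h1, ← hχ₄', pow_orderOf_eq_one, MulChar.one_apply (Ne.isUnit hn0)]
  have hχ4ne1 : χ₄' ≠ 1 := by
    intro h
    rw [h, orderOf_one] at hχ₄'
    omega
  have hcount : ∀ u : K, ((Finset.univ.filter (fun y : K => y ^ 2 = u)).card : ℂ) = 1 + η u := by
    intro u
    have h := quadraticChar_card_sqrts hcharK u
    rw [Set.toFinset_setOf] at h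
    have h2 := congrArg (fun z : ℤ => (z : ℂ)) h
    push_cast at h2
    rw [h2, hquadval]
    ring
  calc ∑ x : K, χ₄ (1 + ω ^ ℓ * algebraMap K L x)
      = ∑ x : K, χ₄' (1 + t * x + n * x ^ 2) := Finset.sum_congr rfl fun x _ => hstepA x
    _ = ∑ x : K, χ₄' n * χ₄' ((x + t / (2 * n)) ^ 2 + d) := by
        apply Finset.sum_congr rfl
        intro x _
        rw [← map_mul]
        congr 1
        rw [hd_def, hm_def]
        field_simp
        ring
    _ = χ₄' n * ∑ x : K, χ₄' ((x + t / (2 * n)) ^ 2 + d) := by rw [← Finset.mul_sum]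
    _ = χ₄' n * ∑ y : K, χ₄' (y ^ 2 + d) := by
        congr 1
        exact Fintype.sum_bijective (· + t / (2 * n))
          (Equiv.addRight (t / (2 * n))).bijective _ _ (fun x => rfl)
    _ = χ₄' n * ∑ u : K,
          ((Finset.univ.filter (fun y : K => y ^ 2 = u)).card : ℂ) * χ₄' (u + d) := by
        congr 1
        rw [← Finset.sum_fiberwise Finset.univ (fun y : K => y ^ 2) (fun y => χ₄' (y ^ 2 + d))]
        apply Finset.sum_congr rfl
        intro u _
        calc ∑ y ∈ Finset.univ.filter (fun y : K => y ^ 2 = u), χ₄' (y ^ 2 + d)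
            = ∑ _y ∈ Finset.univ.filter (fun y : K => y ^ 2 = u), χ₄' (u + d) := by
              apply Finset.sum_congr rfl
              intro y hy
              rw [(Finset.mem_filter.mp hy).2]
          _ = _ := by rw [Finset.sum_const, nsmul_eq_mul]
    _ = χ₄' n * ∑ u : K, (χ₄' (u + d) + η u * χ₄' (u + d)) := by
        congr 1
        apply Finset.sum_congr rfl
        intro u _
        rw [hcount u]
        ring
    _ = χ₄' n * (∑ u : K, χ₄' (u + d) + ∑ u : K, η u * χ₄' (u + d)) := by
        rw [Finset.sum_add_distrib]
    _ = χ₄' n * (0 + (η (-d) * χ₄' d) * ∑ x : K, η x * χ₄' (1 - x)) := by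
        congr 2
        · have h1 : ∑ u : K, χ₄' (u + d) = ∑ v : K, χ₄' v :=
            Fintype.sum_bijective (· + d) (Equiv.addRight d).bijective _ _ (fun u => rfl)
          rw [h1]
          exact MulChar.sum_eq_zero_of_ne_one hχ4ne1
        · calc ∑ u : K, η u * χ₄' (u + d)
              = ∑ v : K, η (-d * v) * χ₄' (-d * v + d) :=
                (Fintype.sum_bijective (fun v : K => -d * v)
                  (Equiv.mulLeft₀ (-d) (neg_ne_zero.mpr hd0)).bijective _ _ (fun v => rfl)).symm
            _ = ∑ v : K, (η (-d) * χ₄' d) * (η v * χ₄' (1 - v)) := by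
                apply Finset.sum_congr rfl
                intro v _
                have hrw : -d * v + d = d * (1 - v) := by ring
                rw [map_mul, hrw, map_mul]
                ring
            _ = (η (-d) * χ₄' d) * ∑ x : K, η x * χ₄' (1 - x) := by rw [← Finset.mul_sum]
    _ = (χ₄' n) ^ 3 * (χ₄' m) ^ 3 * ∑ x : K, η x * χ₄' (1 - x) := by
        rw [hηd]
        have hcd : χ₄' d = χ₄' m * (χ₄' n⁻¹ * χ₄' n⁻¹) := by rw [hd_def, map_mul, map_mul]
        rw [hcd]
        set J : ℂ := ∑ x : K, η x * χ₄' (1 - x) with hJ_def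
        set a : ℂ := χ₄' n with ha_def
        set b : ℂ := χ₄' m with hb_def
        set e : ℂ := χ₄' n⁻¹ with he_def
        linear_combination (J * a * b * e * e) * ha4 - (J * a ^ 3 * b * (a * e + 1)) * hae
          - (J * a ^ 3 * b) * hb2
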